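/- Let F : ℝⁿ → ℝⁿ be globally Lipschitz with constant L and F(0) = 0. Let V : ℝⁿ → ℝ be continuously differentiable with k₁‖x‖² ≤ V(x) ≤ k₂‖x‖² for all x, where k₁, k₂ > 0, and suppose ⟨∇V(x), F(x)⟩ ≤ -k₃‖x‖² for all x, where k₃ > 0. Fix η > 0 and λ ∈ (0,1), and define σ(x) = η‖F(x)‖^{-λ} when F(x) ≠ 0 and σ(x) = 0 otherwise. Then for every x with F(x) ≠ 0, ⟨∇V(x), σ(x)F(x)⟩ ≤ -c·V(x)^α, where α = 1 - λ/2 and c = k₃η/(L^λ k₂^α). -/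

import Mathlib

open scoped RealInnerProductSpace

theorem scaled_lyapunov_finite_time {n : ℕ}
    (F : EuclideanSpace ℝ (Fin n) → EuclideanSpace ℝ (Fin n))
    (V : EuclideanSpace ℝ (Fin n) → ℝ)
    (gradV : EuclideanSpace ℝ (Fin n) → EuclideanSpace ℝ (Fin n))
    (L k₁ k₂ k₃ η lam : ℝ) (hL : 0 < L) (hk₁ : 0 < k₁) (hk₂ : 0 < k₂) (hk₃ : 0 < k₃)
    (hη : 0 < η) (hlam0 : 0 < lam) (hlam1 : lam < 1)
    (hLip : LipschitzWith L.toNNReal F) (hF0 : F 0 = 0)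
    (hgrad : ∀ x, HasGradientAt V (gradV x) x)
    (hgradCont : Continuous gradV)
    (hVlow : ∀ x, k₁ * ‖x‖ ^ 2 ≤ V x) (hVup : ∀ x, V x ≤ k₂ * ‖x‖ ^ 2)
    (hdec : ∀ x, ⟪gradV x, F x⟫ ≤ -k₃ * ‖x‖ ^ 2) :
    ∀ x, F x ≠ 0 →
      ⟪gradV x, (η * ‖F x‖ ^ (-lam)) • F x⟫ ≤
        -(k₃ * η / (L ^ lam * k₂ ^ (1 - lam / 2))) * V x ^ (1 - lam / 2) := by
  intro x hFx
  have hx : x ≠ 0 := by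
    intro h; apply hFx; rw [h, hF0]
  have hxn : 0 < ‖x‖ := norm_pos_iff.mpr hx
  have hFn : 0 < ‖F x‖ := norm_pos_iff.mpr hFx
  have hFle : ‖F x‖ ≤ L * ‖x‖ := by
    have := hLip.dist_le_mul x 0
    simpa [hF0, dist_eq_norm, Real.coe_toNNReal _ hL.le] using this
  have hα : (0:ℝ) < 1 - lam / 2 := by linarith
  have hσpos : 0 < η * ‖F x‖ ^ (-lam) := by positivity
  rw [real_inner_smul_right]
  have h1 : (η * ‖F x‖ ^ (-lam)) * ⟪gradV x, F x⟫
      ≤ (η * ‖F x‖ ^ (-lam)) * (-k₃ * ‖x‖ ^ 2) :=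
    mul_le_mul_of_nonneg_left (hdec x) hσpos.le
  -- bound on ‖F x‖ ^ (-lam)
  have h2 : (L * ‖x‖) ^ (-lam) ≤ ‖F x‖ ^ (-lam) :=
    Real.rpow_le_rpow_of_nonpos hFn hFle (by linarith)
  have hLx : (L * ‖x‖) ^ (-lam) = L ^ (-lam) * ‖x‖ ^ (-lam) :=
    Real.mul_rpow hL.le hxn.le
  have hVpos : 0 ≤ V x := le_trans (by positivity) (hVlow x)
  have h3 : V x ^ (1 - lam/2) ≤ (k₂ * ‖x‖ ^ 2) ^ (1 - lam/2) :=
    Real.rpow_le_rpow hVpos (hVup x) hα.le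
  have hk2x : (k₂ * ‖x‖ ^ 2) ^ (1 - lam/2) = k₂ ^ (1 - lam/2) * ‖x‖ ^ (2 - lam) := by
    rw [Real.mul_rpow hk₂.le (by positivity)]
    congr 1
    rw [← Real.rpow_natCast ‖x‖ 2, ← Real.rpow_mul hxn.le]
    norm_num
    ring_nf
  have hcpos : 0 < k₃ * η / (L ^ lam * k₂ ^ (1 - lam / 2)) := by positivity
  -- combine
  calc (η * ‖F x‖ ^ (-lam)) * ⟪gradV x, F x⟫
      ≤ (η * ‖F x‖ ^ (-lam)) * (-k₃ * ‖x‖ ^ 2) := h1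
    _ ≤ (η * (L * ‖x‖) ^ (-lam)) * (-k₃ * ‖x‖ ^ 2) := by
        have hneg : -k₃ * ‖x‖ ^ 2 ≤ 0 := by nlinarith [sq_nonneg ‖x‖]
        apply mul_le_mul_of_nonpos_right _ hneg
        exact mul_le_mul_of_nonneg_left h2 hη.le
    _ = -(k₃ * η / L ^ lam) * ‖x‖ ^ (2 - lam) := by
        have h5 : ‖x‖ ^ (-lam) * ‖x‖ ^ (2:ℕ) = ‖x‖ ^ (2 - lam) := by
          rw [← Real.rpow_natCast ‖x‖ 2, ← Real.rpow_add hxn]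
          congr 1; push_cast; ring
        rw [hLx, Real.rpow_neg hL.le, ← h5]
        ring
    _ = -(k₃ * η / (L ^ lam * k₂ ^ (1 - lam / 2))) * ((k₂ * ‖x‖ ^ 2) ^ (1 - lam/2)) := by
        rw [hk2x]
        have hk2p : (0:ℝ) < k₂ ^ (1 - lam/2) := Real.rpow_pos_of_pos hk₂ _
        field_simp
    _ ≤ -(k₃ * η / (L ^ lam * k₂ ^ (1 - lam / 2))) * V x ^ (1 - lam / 2) := by
        rw [neg_mul, neg_mul, neg_le_neg_iff]
        exact mul_le_mul_of_nonneg_left h3 hcpos.le
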